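/- arXiv:1908.08944 — 2 statements merged into one kernel-verified Lean document; each statement's English description precedes it below -/
import Mathlib

section
/- Beck–Chevalley swap: let p : C → B be a fibration and g : C₀ → D, k : B₀ → D morphisms in B. If for every Q in the fiber over B₀ there exists a Π-diagram (right-adjoint-type universal diagram) over k based on Q which is stable along g, then every cocartesian lift of g is stable along k, i.e., for every pullback square f,h with g,k and any cocartesian lift of g, the induced comparison morphism over f obtained by pulling back is again cocartesian. -/
open CategoryTheory CategoryTheory.Limits CategoryTheory.Functor

namespace FOHL

variable {𝒮 : Type*} {𝒳 : Type*} [Category 𝒮] [Category 𝒳]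

variable (p : 𝒳 ⥤ 𝒮)

/-- A binary product diagram in the fiber of `p` over `S`. -/
structure IsFiberProductFan (S : 𝒮) {P Q T : 𝒳} (π₁ : T ⟶ P) (π₂ : T ⟶ Q) : Prop where
  lift₁ : p.IsHomLift (𝟙 S) π₁
  lift₂ : p.IsHomLift (𝟙 S) π₂
  universal : ∀ {X : 𝒳} (u : X ⟶ P) (v : X ⟶ Q),
    p.IsHomLift (𝟙 S) u → p.IsHomLift (𝟙 S) v →
      ∃! w : X ⟶ T, p.IsHomLift (𝟙 S) w ∧ w ≫ π₁ = u ∧ w ≫ π₂ = v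

/-- A binary coproduct diagram in the fiber of `p` over `S`. -/
structure IsFiberCoproductCofan (S : 𝒮) {P Q T : 𝒳} (ι₁ : P ⟶ T) (ι₂ : Q ⟶ T) : Prop where
  lift₁ : p.IsHomLift (𝟙 S) ι₁
  lift₂ : p.IsHomLift (𝟙 S) ι₂
  universal : ∀ {X : 𝒳} (u : P ⟶ X) (v : Q ⟶ X),
    p.IsHomLift (𝟙 S) u → p.IsHomLift (𝟙 S) v →
      ∃! w : T ⟶ X, p.IsHomLift (𝟙 S) w ∧ ι₁ ≫ w = u ∧ ι₂ ≫ w = v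

/-- A terminal object of the fiber of `p` over `S`. -/
structure IsFiberTerminal (S : 𝒮) (T : 𝒳) : Prop where
  lies_over : p.obj T = S
  universal : ∀ X : 𝒳, p.obj X = S → ∃! u : X ⟶ T, p.IsHomLift (𝟙 S) u

/-- An initial object of the fiber of `p` over `S`. -/
structure IsFiberInitial (S : 𝒮) (T : 𝒳) : Prop where
  lies_over : p.obj T = S
  universal : ∀ X : 𝒳, p.obj X = S → ∃! u : T ⟶ X, p.IsHomLift (𝟙 S) u

/-- An exponential diagram in the fiber of `p` over `S`: `E` is the exponential `P ⟹ Q`,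
`π₁ : W ⟶ E`, `π₂ : W ⟶ P` is a product fan exhibiting `W = E ∧ P`, and `ev : W ⟶ Q` is the
evaluation morphism. -/
structure IsFiberExponential (S : 𝒮) {P Q E W : 𝒳}
    (π₁ : W ⟶ E) (π₂ : W ⟶ P) (ev : W ⟶ Q) : Prop where
  fan : IsFiberProductFan p S π₁ π₂
  ev_lift : p.IsHomLift (𝟙 S) ev
  universal : ∀ {X V : 𝒳} (ρ₁ : V ⟶ X) (ρ₂ : V ⟶ P), IsFiberProductFan p S ρ₁ ρ₂ →
    ∀ g : V ⟶ Q, p.IsHomLift (𝟙 S) g →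
      ∃! h : X ⟶ E, p.IsHomLift (𝟙 S) h ∧
        ∀ m : V ⟶ W, p.IsHomLift (𝟙 S) m → m ≫ π₁ = ρ₁ ≫ h → m ≫ π₂ = ρ₂ →
          m ≫ ev = g

/-- Stability of fiberwise binary product diagrams under pullback along `f`. -/
def ProductsStableAlong {R S : 𝒮} (f : R ⟶ S) : Prop :=
  ∀ {P Q T P' Q' T' : 𝒳} (π₁ : T ⟶ P) (π₂ : T ⟶ Q)
    (π₁' : T' ⟶ P') (π₂' : T' ⟶ Q') (cP : P' ⟶ P) (cQ : Q' ⟶ Q) (cT : T' ⟶ T),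
    IsFiberProductFan p S π₁ π₂ →
    p.IsStronglyCartesian f cP → p.IsStronglyCartesian f cQ → p.IsStronglyCartesian f cT →
    p.IsHomLift (𝟙 R) π₁' → p.IsHomLift (𝟙 R) π₂' →
    π₁' ≫ cP = cT ≫ π₁ → π₂' ≫ cQ = cT ≫ π₂ →
    IsFiberProductFan p R π₁' π₂'

/-- Stability of fiberwise binary coproduct diagrams under pullback along `f`. -/
def CoproductsStableAlong {R S : 𝒮} (f : R ⟶ S) : Prop :=
  ∀ {P Q T P' Q' T' : 𝒳} (ι₁ : P ⟶ T) (ι₂ : Q ⟶ T)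
    (ι₁' : P' ⟶ T') (ι₂' : Q' ⟶ T') (cP : P' ⟶ P) (cQ : Q' ⟶ Q) (cT : T' ⟶ T),
    IsFiberCoproductCofan p S ι₁ ι₂ →
    p.IsStronglyCartesian f cP → p.IsStronglyCartesian f cQ → p.IsStronglyCartesian f cT →
    p.IsHomLift (𝟙 R) ι₁' → p.IsHomLift (𝟙 R) ι₂' →
    ι₁' ≫ cT = cP ≫ ι₁ → ι₂' ≫ cT = cQ ≫ ι₂ →
    IsFiberCoproductCofan p R ι₁' ι₂'

/-- Stability of fiberwise exponential diagrams under pullback along `f`. -/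
def ExponentialsStableAlong {R S : 𝒮} (f : R ⟶ S) : Prop :=
  ∀ {P Q E W P' Q' E' W' : 𝒳} (π₁ : W ⟶ E) (π₂ : W ⟶ P) (ev : W ⟶ Q)
    (π₁' : W' ⟶ E') (π₂' : W' ⟶ P') (ev' : W' ⟶ Q')
    (cE : E' ⟶ E) (cP : P' ⟶ P) (cQ : Q' ⟶ Q) (cW : W' ⟶ W),
    IsFiberExponential p S π₁ π₂ ev →
    p.IsStronglyCartesian f cE → p.IsStronglyCartesian f cP →
    p.IsStronglyCartesian f cQ → p.IsStronglyCartesian f cW →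
    p.IsHomLift (𝟙 R) π₁' → p.IsHomLift (𝟙 R) π₂' → p.IsHomLift (𝟙 R) ev' →
    π₁' ≫ cE = cW ≫ π₁ → π₂' ≫ cP = cW ≫ π₂ → ev' ≫ cQ = cW ≫ ev →
    IsFiberExponential p R π₁' π₂' ev'

/-- A `Π`-diagram over `f : R ⟶ S` based on `P` (with `P` in the fiber over `R`): a cartesian
morphism `c : X ⟶ Y` over `f` (so `X = f*Y`, `Y = Π_f P`) and a vertical evaluation morphism
`ε : X ⟶ P` which is universal: for every cartesian `c' : X' ⟶ Y'` over `f` and vertical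
`u : X' ⟶ P` there is a unique vertical `v : Y' ⟶ Y` whose pullback composed with `ε` is `u`. -/
structure IsPiDiagram {R S : 𝒮} (f : R ⟶ S) {P X Y : 𝒳} (c : X ⟶ Y) (ε : X ⟶ P) : Prop where
  cart : p.IsStronglyCartesian f c
  vert : p.IsHomLift (𝟙 R) ε
  universal : ∀ {X' Y' : 𝒳} (c' : X' ⟶ Y'), p.IsStronglyCartesian f c' →
    ∀ u : X' ⟶ P, p.IsHomLift (𝟙 R) u →
      ∃! v : Y' ⟶ Y, p.IsHomLift (𝟙 S) v ∧
        ∀ w : X' ⟶ X, p.IsHomLift (𝟙 R) w → w ≫ c = c' ≫ v → w ≫ ε = u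

/-- The Beck–Chevalley condition: stability of a `Π`-diagram over `g : Cc ⟶ D` along
`k : Bb ⟶ D`.  For every pullback square and every pullback of the diagram along the square,
the resulting diagram is again a `Π`-diagram. -/
def PiDiagramStableAlong {Cc D : 𝒮} (g : Cc ⟶ D) {P X Y : 𝒳} (c : X ⟶ Y) (ε : X ⟶ P)
    {Bb : 𝒮} (k : Bb ⟶ D) : Prop :=
  ∀ {A : 𝒮} (f : A ⟶ Bb) (h : A ⟶ Cc), IsPullback f h k g →
    ∀ {P' X' Y' : 𝒳} (cP : P' ⟶ P) (cX : X' ⟶ X) (cY : Y' ⟶ Y)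
      (q : X' ⟶ Y') (ε' : X' ⟶ P'),
      p.IsStronglyCartesian h cP → p.IsStronglyCartesian h cX → p.IsStronglyCartesian k cY →
      p.IsHomLift f q → q ≫ cY = cX ≫ c →
      p.IsHomLift (𝟙 A) ε' → ε' ≫ cP = cX ≫ ε →
      IsPiDiagram p f q ε'

/-- Stability of a cocartesian lift `t : P ⟶ Z` of `g : Cc ⟶ D` along `k : Bb ⟶ D`:
for every pullback square, the induced comparison morphism between the pullbacks is again
cocartesian. -/
def CocartesianStableAlong {Cc D : 𝒮} (g : Cc ⟶ D) {P Z : 𝒳} (t : P ⟶ Z)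
    {Bb : 𝒮} (k : Bb ⟶ D) : Prop :=
  ∀ {A : 𝒮} (f : A ⟶ Bb) (h : A ⟶ Cc), IsPullback f h k g →
    ∀ {P' Z' : 𝒳} (cP : P' ⟶ P) (cZ : Z' ⟶ Z) (m : P' ⟶ Z'),
      p.IsStronglyCartesian h cP → p.IsStronglyCartesian k cZ →
      p.IsHomLift f m → m ≫ cZ = cP ≫ t →
      p.IsStronglyCocartesian f m

end FOHL

open CategoryTheory CategoryTheory.Functor FOHL

/-- Beck–Chevalley swap. Let `p : 𝒳 ⥤ 𝒮` be a fibration and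
`g : C₀ ⟶ D`, `k : B₀ ⟶ D` morphisms of `𝒮`.  If for every `Q` in the fiber over `B₀` there
is a `Π`-diagram over `k` based on `Q` which is stable along `g`, then every cocartesian lift
of `g` is stable along `k`. -/
theorem cocartesian_stable_of_pi_stable
    {𝒮 𝒳 : Type*} [Category 𝒮] [Category 𝒳] (p : 𝒳 ⥤ 𝒮) [p.IsFibered]
    {B₀ C₀ D : 𝒮} (g : C₀ ⟶ D) (k : B₀ ⟶ D)
    (hPi : ∀ Q : 𝒳, p.obj Q = B₀ → ∃ (X Y : 𝒳) (c : X ⟶ Y) (ε : X ⟶ Q),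
      IsPiDiagram p k c ε ∧ PiDiagramStableAlong p k c ε g) :
    ∀ {P Z : 𝒳} (t : P ⟶ Z), p.IsStronglyCocartesian g t →
      CocartesianStableAlong p g t k := by
  intro P Z t ht
  intro A f h hPB P' Z' cP cZ m hcP hcZ hm hcomm
  haveI := ht; haveI := hcP; haveI := hcZ; haveI := hm
  -- Core claim: for every `W` over `B₀` and `ψ : P' ⟶ W` over `f`, there is a unique vertical
  -- `χ₀ : Z' ⟶ W` with `m ≫ χ₀ = ψ`.
  have core : ∀ (W : 𝒳), p.obj W = B₀ → ∀ (ψ : P' ⟶ W), p.IsHomLift f ψ →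
      ∃! χ₀ : Z' ⟶ W, p.IsHomLift (𝟙 B₀) χ₀ ∧ m ≫ χ₀ = ψ := by
    intro W hW ψ hψ
    haveI := hψ
    obtain ⟨X, Y, c, ε, hPid, hStab⟩ := hPi W hW
    haveI hc := hPid.cart
    haveI hε := hPid.vert
    -- Pull the Π-diagram back along the (flipped) pullback square.
    obtain ⟨X₁, cX, hcX⟩ := CategoryTheory.IsPreFibered.exists_isCartesian p (IsHomLift.domain_eq p k c) f
    haveI := hcX
    haveI hcX' : p.IsStronglyCartesian f cX := inferInstance
    obtain ⟨Y₁, cY, hcY⟩ :=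
      CategoryTheory.IsPreFibered.exists_isCartesian p (IsHomLift.codomain_eq p k c) g
    haveI := hcY
    haveI hcY' : p.IsStronglyCartesian g cY := inferInstance
    obtain ⟨W₁, cW, hcW⟩ := CategoryTheory.IsPreFibered.exists_isCartesian p hW f
    haveI := hcW
    haveI hcW' : p.IsStronglyCartesian f cW := inferInstance
    obtain ⟨q, ⟨hq, hqfac⟩, -⟩ :=
      IsStronglyCartesian.universal_property p g cY h (f ≫ k) hPB.w (cX ≫ c)
    haveI := hq
    obtain ⟨ε₁, ⟨hε₁, hε₁fac⟩, -⟩ :=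
      IsStronglyCartesian.universal_property p f cW (𝟙 A) f (Category.id_comp f).symm (cX ≫ ε)
    haveI := hε₁
    have hPid' : IsPiDiagram p h q ε₁ :=
      hStab h f hPB.flip cW cX cY q ε₁ hcW' hcX' hcY' hq hqfac hε₁ hε₁fac
    haveI hq' := hPid'.cart
    -- Factor `ψ` through `cW` by a vertical morphism `ψ₁`.
    obtain ⟨ψ₁, ⟨hψ₁, hψ₁fac⟩, -⟩ :=
      IsStronglyCartesian.universal_property p f cW (𝟙 A) f (Category.id_comp f).symm ψ
    haveI := hψ₁
    -- Use the pulled-back Π-diagram against the cartesian morphism `cP`.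
    obtain ⟨v₁, ⟨hv₁, hv₁prop⟩, hv₁uniq⟩ := hPid'.universal cP hcP ψ₁ hψ₁
    haveI := hv₁
    -- Use cocartesianness of `t` to transpose `v₁ ≫ cY` to a vertical `v : Z ⟶ Y`.
    obtain ⟨v, ⟨hv, hvfac⟩, -⟩ :=
      IsStronglyCocartesian.universal_property p g t (𝟙 D) g (Category.comp_id g).symm (v₁ ≫ cY)
    haveI := hv
    -- Factor `cZ ≫ v` through `c` by a vertical morphism `w`.
    obtain ⟨w, ⟨hw, hwfac⟩, -⟩ :=
      IsStronglyCartesian.universal_property p k c (𝟙 B₀) k (Category.id_comp k).symm (cZ ≫ v)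
    haveI := hw
    -- Factor `cP ≫ v₁` through `q` by a vertical morphism `w₁`.
    obtain ⟨w₁, ⟨hw₁, hw₁fac⟩, -⟩ :=
      IsStronglyCartesian.universal_property p h q (𝟙 A) h (Category.id_comp h).symm (cP ≫ v₁)
    haveI := hw₁
    have key1 : m ≫ w = w₁ ≫ cX := by
      apply IsStronglyCartesian.ext p k c f
      calc (m ≫ w) ≫ c = m ≫ cZ ≫ v := by rw [Category.assoc, hwfac]
        _ = cP ≫ t ≫ v := by rw [← Category.assoc, hcomm, Category.assoc]
        _ = cP ≫ v₁ ≫ cY := by rw [hvfac]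
        _ = (w₁ ≫ q) ≫ cY := by rw [← Category.assoc, hw₁fac]
        _ = (w₁ ≫ cX) ≫ c := by rw [Category.assoc, hqfac, Category.assoc]
    have hw₁ε : w₁ ≫ ε₁ = ψ₁ := hv₁prop w₁ hw₁ hw₁fac
    refine ⟨w ≫ ε, ⟨inferInstance, ?_⟩, ?_⟩
    · calc m ≫ w ≫ ε = (m ≫ w) ≫ ε := by rw [Category.assoc]
        _ = w₁ ≫ cX ≫ ε := by rw [key1, Category.assoc]
        _ = (w₁ ≫ ε₁) ≫ cW := by rw [← hε₁fac, Category.assoc]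
        _ = ψ := by rw [hw₁ε, hψ₁fac]
    · rintro χ₀' ⟨hχ₀', hmχ₀'⟩
      haveI := hχ₀'
      obtain ⟨v', ⟨hv', hv'prop⟩, -⟩ := hPid.universal cZ hcZ χ₀' hχ₀'
      haveI := hv'
      obtain ⟨w', ⟨hw', hw'fac⟩, -⟩ :=
        IsStronglyCartesian.universal_property p k c (𝟙 B₀) k (Category.id_comp k).symm (cZ ≫ v')
      haveI := hw'
      have hw'ε : w' ≫ ε = χ₀' := hv'prop w' hw' hw'fac
      obtain ⟨v₁', ⟨hv₁', hv₁'fac⟩, -⟩ :=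
        IsStronglyCartesian.universal_property p g cY (𝟙 C₀) g (Category.id_comp g).symm (t ≫ v')
      haveI := hv₁'
      obtain ⟨w₁', ⟨hw₁', hw₁'fac⟩, -⟩ :=
        IsStronglyCartesian.universal_property p h q (𝟙 A) h (Category.id_comp h).symm (cP ≫ v₁')
      haveI := hw₁'
      have key2 : w₁' ≫ cX = m ≫ w' := by
        apply IsStronglyCartesian.ext p k c f
        calc (w₁' ≫ cX) ≫ c = (w₁' ≫ q) ≫ cY := by
              rw [Category.assoc, Category.assoc, hqfac]
          _ = cP ≫ v₁' ≫ cY := by rw [← Category.assoc, hw₁'fac, Category.assoc]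
          _ = cP ≫ t ≫ v' := by rw [hv₁'fac]
          _ = m ≫ cZ ≫ v' := by rw [← Category.assoc, ← hcomm, Category.assoc]
          _ = (m ≫ w') ≫ c := by rw [← hw'fac, Category.assoc]
      have key3 : w₁' ≫ ε₁ = ψ₁ := by
        apply IsStronglyCartesian.ext p f cW (𝟙 A)
        calc (w₁' ≫ ε₁) ≫ cW = w₁' ≫ cX ≫ ε := by rw [Category.assoc, hε₁fac]
          _ = (m ≫ w') ≫ ε := by rw [← Category.assoc, key2]
          _ = ψ := by rw [Category.assoc, hw'ε, hmχ₀']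
          _ = ψ₁ ≫ cW := hψ₁fac.symm
      have hv₁'eq : v₁' = v₁ := by
        apply hv₁uniq
        refine ⟨hv₁', ?_⟩
        intro w'' hw'' hfac
        haveI := hw''
        have : w'' = w₁' :=
          IsStronglyCartesian.ext p h q (𝟙 A) (hfac.trans hw₁'fac.symm)
        rw [this]; exact key3
      have hveq : v' = v := by
        apply IsStronglyCocartesian.ext p g t (𝟙 D)
        rw [hvfac, ← hv₁'fac, hv₁'eq]
      have hweq : w' = w := by
        apply IsStronglyCartesian.ext p k c (𝟙 B₀)
        rw [hwfac, hw'fac, hveq]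
      rw [← hw'ε, hweq]
  -- Deduce strong cocartesianness of `m` from the core claim.
  refine { toIsHomLift := hm, universal_property' := ?_ }
  intro b' u φ' hφ'
  haveI := hφ'
  obtain ⟨W, cU, hcU⟩ := CategoryTheory.IsPreFibered.exists_isCartesian p rfl u
  haveI := hcU
  haveI hcU' : p.IsStronglyCartesian u cU := inferInstance
  obtain ⟨ψ, ⟨hψ, hψfac⟩, -⟩ := IsStronglyCartesian.universal_property p u cU f (f ≫ u) rfl φ'
  haveI := hψ
  obtain ⟨χ₀, ⟨hχ₀, hχ₀fac⟩, huniq⟩ := core W (IsHomLift.domain_eq p u cU) ψ hψ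
  haveI := hχ₀
  refine ⟨χ₀ ≫ cU, ⟨inferInstance, ?_⟩, ?_⟩
  · rw [← Category.assoc, hχ₀fac, hψfac]
  · rintro χ' ⟨hχ', hfac'⟩
    haveI := hχ'
    obtain ⟨χ₁, ⟨hχ₁, hχ₁fac⟩, -⟩ :=
      IsStronglyCartesian.universal_property p u cU (𝟙 B₀) u (Category.id_comp u).symm χ'
    haveI := hχ₁
    have hmχ₁ : m ≫ χ₁ = ψ := by
      apply IsStronglyCartesian.ext p u cU f
      rw [Category.assoc, hχ₁fac, hfac', hψfac]
    have : χ₁ = χ₀ := huniq χ₁ ⟨hχ₁, hmχ₁⟩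
    rw [← hχ₁fac, this]
end

section
/- Composition of Π-diagrams: in a Grothendieck fibration p : C → B, given composable morphisms f : A → B₀ and g : B₀ → C₀, a Π-diagram over f based on P (with output Π_f P) and a Π-diagram over g based on an object R isomorphic to the data as constructed, the composite diagram — obtained by choosing a cartesian lift of f into the input of the second diagram and composing appropriately — is again a Π-diagram over g∘f based on P. In particular, if pullback along f and along g admit right adjoints, then pullback along g∘f admits a right adjoint given by the composite. -/
open CategoryTheory CategoryTheory.Limits CategoryTheory.Functor

open CategoryTheory CategoryTheory.Functor FOHL

/-- composition of `Π`-diagrams. In a Grothendieck fibration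
`p : 𝒳 ⥤ 𝒮`, given composable morphisms `f : A ⟶ B₀` and `g : B₀ ⟶ C₀`, a `Π`-diagram over
`f` based on `P` (with data `q : Q ⟶ R₀`, `pr : Q ⟶ P`) and a `Π`-diagram over `g` based on
`R₀` (with data `t : S ⟶ T`, `s : S ⟶ R₀`), the composite diagram — obtained by choosing a
cartesian lift `ct : W ⟶ S` of `f` and the induced vertical comparison `w : W ⟶ Q` with
`w ≫ q = ct ≫ s`, and composing — is again a `Π`-diagram over `f ≫ g` based on `P`.
In particular, if pullback along `f` and along `g` admit right adjoints, then pullback along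
`f ≫ g` admits a right adjoint given by the composite. -/
theorem pi_diagram_comp
    {𝒮 𝒳 : Type*} [Category 𝒮] [Category 𝒳] (p : 𝒳 ⥤ 𝒮) [p.IsFibered]
    {A B₀ C₀ : 𝒮} (f : A ⟶ B₀) (g : B₀ ⟶ C₀)
    {P Q R₀ S T : 𝒳} (q : Q ⟶ R₀) (pr : Q ⟶ P) (h₁ : IsPiDiagram p f q pr)
    (t : S ⟶ T) (s : S ⟶ R₀) (h₂ : IsPiDiagram p g t s)
    {W : 𝒳} (ct : W ⟶ S) (hct : p.IsStronglyCartesian f ct)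
    (w : W ⟶ Q) (hw : p.IsHomLift (𝟙 A) w) (hcomm : w ≫ q = ct ≫ s) :
    IsPiDiagram p (f ≫ g) (ct ≫ t) (w ≫ pr) := by
  haveI := hct
  haveI := h₁.cart
  haveI := h₂.cart
  haveI := hw
  haveI := h₁.vert
  haveI := h₂.vert
  refine ⟨inferInstance, by simpa using IsHomLift.comp p (𝟙 A) (𝟙 A) w pr, ?_⟩
  intro X' Y' c' hc' u hu
  haveI := hc'; haveI := hu
  -- a strongly cartesian lift `m : M ⟶ Y'` of `g`
  have hY' : p.obj Y' = C₀ := IsHomLift.codomain_eq p (f ≫ g) c'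
  obtain ⟨M, m, hm⟩ := IsPreFibered.exists_isCartesian p hY' g
  haveI := hm
  haveI hmS : p.IsStronglyCartesian g m := inferInstance
  -- factor `c'` as `d ≫ m` with `d` strongly cartesian over `f`
  set d : X' ⟶ M := IsStronglyCartesian.map p g m (f' := f ≫ g) rfl c' with hd_def
  have hd_fac : d ≫ m = c' := IsStronglyCartesian.fac p g m rfl c'
  haveI hd_lift : p.IsHomLift f d := IsStronglyCartesian.map_isHomLift p g m rfl c'
  haveI hdc : p.IsStronglyCartesian f d := by
    haveI : p.IsStronglyCartesian (f ≫ g) (d ≫ m) := hd_fac ▸ hc'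
    exact IsStronglyCartesian.of_comp p (g := g) (ψ := m)
  -- first apply the universal property of the Π-diagram over f
  obtain ⟨v₁, ⟨hv₁lift, hv₁prop⟩, hv₁uniq⟩ := h₁.universal d hdc u hu
  haveI := hv₁lift
  -- then the universal property of the Π-diagram over g
  obtain ⟨v, ⟨hvlift, hvprop⟩, hvuniq⟩ := h₂.universal m hmS v₁ hv₁lift
  haveI := hvlift
  refine ⟨v, ⟨hvlift, ?_⟩, ?_⟩
  · -- v satisfies the property
    intro w' hw' hweq
    haveI := hw'
    -- σ : M ⟶ S vertical with σ ≫ t = m ≫ v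
    haveI : p.IsHomLift g (m ≫ v) := by simpa using IsHomLift.comp p g (𝟙 C₀) m v
    set σ : M ⟶ S := IsStronglyCartesian.map p g t (Category.id_comp g).symm (m ≫ v) with hσ_def
    have hσ_fac : σ ≫ t = m ≫ v := IsStronglyCartesian.fac p g t _ (m ≫ v)
    haveI hσ_lift : p.IsHomLift (𝟙 B₀) σ := IsStronglyCartesian.map_isHomLift p g t _ (m ≫ v)
    have hσs : σ ≫ s = v₁ := hvprop σ hσ_lift hσ_fac
    -- w' ≫ ct = d ≫ σ
    haveI : p.IsHomLift f (w' ≫ ct) := by simpa using IsHomLift.comp p (𝟙 A) f w' ct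
    haveI : p.IsHomLift f (d ≫ σ) := by simpa using IsHomLift.comp p f (𝟙 B₀) d σ
    have key : w' ≫ ct = d ≫ σ := by
      apply IsStronglyCartesian.ext p g t f
      calc (w' ≫ ct) ≫ t = c' ≫ v := by rw [Category.assoc, hweq]
        _ = (d ≫ m) ≫ v := by rw [hd_fac]
        _ = (d ≫ σ) ≫ t := by rw [Category.assoc, Category.assoc, hσ_fac]
    -- conclude via the property defining v₁
    haveI : p.IsHomLift (𝟙 A) (w' ≫ w) := by simpa using IsHomLift.comp p (𝟙 A) (𝟙 A) w' w
    have : (w' ≫ w) ≫ pr = u := by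
      refine hv₁prop (w' ≫ w) inferInstance ?_
      rw [Category.assoc, hcomm, ← Category.assoc, key, Category.assoc, hσs]
    simpa [Category.assoc] using this
  · -- uniqueness
    intro v' ⟨hv'lift, hv'prop⟩
    haveI := hv'lift
    refine hvuniq v' ⟨hv'lift, ?_⟩
    intro σ hσ hσt
    haveI := hσ
    refine (hv₁uniq (σ ≫ s) ⟨by simpa using IsHomLift.comp p (𝟙 B₀) (𝟙 B₀) σ s, ?_⟩)
    intro w'' hw'' heq
    haveI := hw''
    -- lift d ≫ σ through ct
    haveI : p.IsHomLift f (d ≫ σ) := by simpa using IsHomLift.comp p f (𝟙 B₀) d σ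
    set ρ : X' ⟶ W := IsStronglyCartesian.map p f ct (Category.id_comp f).symm (d ≫ σ) with hρ_def
    have hρ_fac : ρ ≫ ct = d ≫ σ := IsStronglyCartesian.fac p f ct _ (d ≫ σ)
    haveI hρ_lift : p.IsHomLift (𝟙 A) ρ := IsStronglyCartesian.map_isHomLift p f ct _ (d ≫ σ)
    -- ρ ≫ w = w''
    haveI : p.IsHomLift (𝟙 A) (ρ ≫ w) := by simpa using IsHomLift.comp p (𝟙 A) (𝟙 A) ρ w
    have hρw : ρ ≫ w = w'' := by
      apply IsStronglyCartesian.ext p f q (𝟙 A)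
      rw [Category.assoc, hcomm, ← Category.assoc, hρ_fac, heq, Category.assoc]
    have : ρ ≫ w ≫ pr = u := by
      refine hv'prop ρ hρ_lift ?_
      rw [← Category.assoc, hρ_fac, Category.assoc, hσt, ← Category.assoc, hd_fac]
    rw [← hρw, Category.assoc]
    exact this
end
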